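/- Let v : ℝ → ℝ and s₀ ∈ ℝ, and set x₀ = 2s₀. Suppose x₀³ − 2·v(x₀)·x₀² ≠ 0, s₀ − v(2s₀) ≠ 0, and v has derivative 1/(x₀³ − 2·v(x₀)·x₀²) at x₀ — that is, v solves the equation obtained from Liouville's Class 2 equation y' = y³ − 2xy² by the inverse transformation {x ↔ y}. Define w(s) = 1/(s − v(2s)). Then w has derivative w(s₀)³/(4s₀²) − w(s₀)² at s₀. Hence Liouville's Class 3 equation y' = y³/(4x²) − y² can be obtained from Class 2 by changing {x ↔ y} and then applying the change of variables {x = 2t, y = −1/u + t}; it is therefore a member of the AIA class. -/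

import Mathlib

/-- Liouville's Class 3 equation `y' = y³/(4x²) − y²` can be obtained from Class 2
(`y' = y³ − 2xy²`) by changing `{x ↔ y}` — giving `y' = 1/(x³ − 2yx²)` — and then
applying the change of variables `{x = 2t, y = −1/u + t}`, i.e. `w(s) = 1/(s − v(2s))`;
it is therefore a member of the AIA class. -/
theorem class3_from_class2
    (v : ℝ → ℝ) (s₀ : ℝ) (x₀ : ℝ) (hx₀ : x₀ = 2 * s₀)
    (h1 : x₀ ^ 3 - 2 * v x₀ * x₀ ^ 2 ≠ 0)
    (h2 : s₀ - v (2 * s₀) ≠ 0)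
    (hv : HasDerivAt v (1 / (x₀ ^ 3 - 2 * v x₀ * x₀ ^ 2)) x₀)
    (w : ℝ → ℝ) (hw : w = fun s => 1 / (s - v (2 * s))) :
    HasDerivAt w ((w s₀) ^ 3 / (4 * s₀ ^ 2) - (w s₀) ^ 2) s₀ := by
  subst hx₀
  have hs₀ : s₀ ≠ 0 := by
    rintro rfl
    simp at h1
  have hcomp : HasDerivAt (fun s : ℝ => v (2 * s))
      ((1 / ((2 * s₀) ^ 3 - 2 * v (2 * s₀) * (2 * s₀) ^ 2)) * 2) s₀ := by
    have := (hv.comp s₀ ((hasDerivAt_id s₀).const_mul 2))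
    simpa [Function.comp_def] using this
  have hg : HasDerivAt (fun s : ℝ => s - v (2 * s))
      (1 - (1 / ((2 * s₀) ^ 3 - 2 * v (2 * s₀) * (2 * s₀) ^ 2)) * 2) s₀ :=
    (hasDerivAt_id s₀).sub hcomp
  have hw' : HasDerivAt w
      (-(1 - (1 / ((2 * s₀) ^ 3 - 2 * v (2 * s₀) * (2 * s₀) ^ 2)) * 2) / (s₀ - v (2 * s₀)) ^ 2) s₀ := by
    rw [hw]
    simpa [one_div, Pi.inv_def] using hg.inv h2
  convert hw' using 1
  rw [hw]
  have h3 : (2 * s₀) ^ 3 - 2 * v (2 * s₀) * (2 * s₀) ^ 2 = 8 * s₀ ^ 2 * (s₀ - v (2 * s₀)) := by ring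
  rw [h3]
  beta_reduce
  generalize v (2 * s₀) = b at h2 ⊢
  field_simp
  ring
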